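/- Let α be irrational with 1 < α < 4/3 and let n be a positive integer with {αn} > α/2. Then ‖(4n − 4)·(α/4)‖ ≥ min(1/3, {α}). -/
import Mathlib


/-- distance from a real number to the nearest integer -/
noncomputable def intDist (x : ℝ) : ℝ := ⨅ y : ℤ, |x - (y : ℝ)|

theorem intDist_ge_of_fract_gt (α : ℝ) (hα : Irrational α) (h1 : 1 < α) (h2 : α < 4 / 3)
    (n : ℕ) (hn : 0 < n) (h : Int.fract (α * n) > α / 2) :
    intDist ((4 * (n : ℝ) - 4) * (α / 4)) ≥ min (1 / 3) (Int.fract α) := by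
  have hx : (4 * (n : ℝ) - 4) * (α / 4) = α * n - α := by ring
  rw [hx]
  set x : ℝ := α * n - α with hxdef
  have hfloorα : ⌊α⌋ = 1 := by
    rw [Int.floor_eq_iff]
    constructor <;> push_cast <;> linarith
  have hfa : Int.fract α = α - 1 := by
    rw [Int.fract, hfloorα]; push_cast; ring
  set f : ℝ := Int.fract (α * n) with hfdef
  have hf1 : f < 1 := Int.fract_lt_one _
  have hfloor : (⌊α * n⌋ : ℝ) = α * n - f := by rw [hfdef, Int.fract]; ring
  have ht : Int.fract x = f - (α - 1) := by
    have hxe : x = (f - (α - 1)) + (⌊α * n⌋ - 1 : ℤ) := by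
      push_cast [hfloor]; ring
    rw [hxe, Int.fract_add_intCast, Int.fract_eq_self.mpr ⟨by linarith, by linarith⟩]
  have h13 : (1 : ℝ) / 3 ≤ Int.fract x := by rw [ht]; linarith
  have h2' : Int.fract α ≤ 1 - Int.fract x := by rw [ht, hfa]; linarith
  have hmin1 : min (1 / 3) (Int.fract α) ≤ Int.fract x :=
    le_trans (min_le_left _ _) h13
  have hmin2 : min (1 / 3) (Int.fract α) ≤ 1 - Int.fract x :=
    le_trans (min_le_right _ _) h2'
  rw [intDist, ge_iff_le]
  apply le_ciInf
  intro y
  have hfx : (⌊x⌋ : ℝ) = x - Int.fract x := by rw [Int.fract]; ring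
  rcases le_or_gt y ⌊x⌋ with hy | hy
  · have hy' : (y : ℝ) ≤ (⌊x⌋ : ℝ) := by exact_mod_cast hy
    have : Int.fract x ≤ x - y := by linarith
    rw [abs_of_nonneg (by linarith [Int.fract_nonneg x, hmin1])]
    linarith
  · have hy' : (⌊x⌋ : ℝ) + 1 ≤ (y : ℝ) := by exact_mod_cast hy
    have : 1 - Int.fract x ≤ y - x := by linarith
    rw [abs_of_nonpos (by linarith [Int.fract_lt_one x])]
    linarith
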